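/- With m = ⌊p⌋, the Poisson probability at the floor of the mean satisfies lim_{p→∞} h_m(p) · √(2πp) = 1; in particular there exist C₁ > 0 and p₀ > 0 such that h_{⌊p⌋}(p) ≤ C₁ / √p for all p ≥ p₀. -/

import Mathlib

open Filter

private lemma poisson_aux_tendsto :
    Tendsto (fun p : ℝ =>
        (Real.exp (-p) * p ^ (⌊p⌋₊) / (Nat.factorial ⌊p⌋₊ : ℝ)) * Real.sqrt (2 * Real.pi * p))
      atTop (nhds 1) := by
  -- Stirling factor
  have hπ : Real.sqrt Real.pi ≠ 0 := by positivity
  have hB : Tendsto (fun p : ℝ => Real.sqrt Real.pi / Stirling.stirlingSeq ⌊p⌋₊) atTop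
      (nhds 1) := by
    have h1 : Tendsto (fun n : ℕ => Real.sqrt Real.pi / Stirling.stirlingSeq n) atTop
        (nhds 1) := by
      have := tendsto_const_nhds (x := Real.sqrt Real.pi) (f := atTop (α := ℕ)) |>.div
        Stirling.tendsto_stirlingSeq_sqrt_pi hπ
      simpa [div_self hπ, Pi.div_def] using this
    exact h1.comp tendsto_nat_floor_atTop
  -- exponent correction g
  set g : ℝ → ℝ := fun p => ((⌊p⌋₊ : ℝ) - p) + (⌊p⌋₊ : ℝ) * Real.log (p / (⌊p⌋₊ : ℝ)) with hgdef
  have hinv : Tendsto (fun p : ℝ => p⁻¹) atTop (nhds 0) := tendsto_inv_atTop_zero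
  have hfacts : ∀ p : ℝ, 2 ≤ p → (1 : ℝ) ≤ (⌊p⌋₊ : ℝ) ∧ (⌊p⌋₊ : ℝ) ≤ p ∧ p < (⌊p⌋₊ : ℝ) + 1 := by
    intro p hp
    have h0 : (0:ℝ) ≤ p := by linarith
    refine ⟨?_, Nat.floor_le h0, Nat.lt_floor_add_one p⟩
    exact_mod_cast Nat.one_le_cast.mpr (Nat.le_floor (by exact_mod_cast (by linarith : (1:ℝ) ≤ p)))
  have hg : Tendsto g atTop (nhds 0) := by
    have hlow : ∀ᶠ p : ℝ in atTop, -p⁻¹ ≤ g p := by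
      filter_upwards [eventually_ge_atTop (2:ℝ)] with p hp
      obtain ⟨hm1, hmp, hpm⟩ := hfacts p hp
      have hm0 : (0:ℝ) < (⌊p⌋₊ : ℝ) := by linarith
      have hp0 : (0:ℝ) < p := by linarith
      have ht : (0:ℝ) < p / (⌊p⌋₊ : ℝ) := by positivity
      have hl : 1 - (p / (⌊p⌋₊:ℝ))⁻¹ ≤ Real.log (p / (⌊p⌋₊:ℝ)) :=
        Real.one_sub_inv_le_log_of_pos ht
      have hinveq : (p / (⌊p⌋₊:ℝ))⁻¹ = (⌊p⌋₊:ℝ) / p := by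
        rw [inv_div]
      rw [hinveq] at hl
      have key : (⌊p⌋₊:ℝ) * (1 - (⌊p⌋₊:ℝ)/p) ≤ (⌊p⌋₊:ℝ) * Real.log (p / (⌊p⌋₊:ℝ)) :=
        mul_le_mul_of_nonneg_left hl (le_of_lt hm0)
      have hsq : (p - (⌊p⌋₊:ℝ))^2 ≤ 1 := by nlinarith
      have key2 : -p⁻¹ ≤ (⌊p⌋₊:ℝ) - p + (⌊p⌋₊:ℝ) * (1 - (⌊p⌋₊:ℝ)/p) := by
        have heq : (⌊p⌋₊:ℝ) - p + (⌊p⌋₊:ℝ) * (1 - (⌊p⌋₊:ℝ)/p) + p⁻¹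
            = (1 - (p - (⌊p⌋₊:ℝ))^2)/p := by
          field_simp
          ring
        have hge : (0:ℝ) ≤ (1 - (p - (⌊p⌋₊:ℝ))^2)/p :=
          div_nonneg (by linarith) hp0.le
        linarith [heq ▸ hge]
      simp only [hgdef]
      linarith
    have hhigh : ∀ᶠ p : ℝ in atTop, g p ≤ 0 := by
      filter_upwards [eventually_ge_atTop (2:ℝ)] with p hp
      obtain ⟨hm1, hmp, hpm⟩ := hfacts p hp
      have hm0 : (0:ℝ) < (⌊p⌋₊ : ℝ) := by linarith
      have hp0 : (0:ℝ) < p := by linarith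
      have ht : (0:ℝ) < p / (⌊p⌋₊ : ℝ) := by positivity
      have hl : Real.log (p / (⌊p⌋₊:ℝ)) ≤ p / (⌊p⌋₊:ℝ) - 1 := Real.log_le_sub_one_of_pos ht
      have key : (⌊p⌋₊:ℝ) * Real.log (p / (⌊p⌋₊:ℝ)) ≤ (⌊p⌋₊:ℝ) * (p/(⌊p⌋₊:ℝ) - 1) :=
        mul_le_mul_of_nonneg_left hl (le_of_lt hm0)
      have : (⌊p⌋₊:ℝ) * (p/(⌊p⌋₊:ℝ) - 1) = p - (⌊p⌋₊:ℝ) := by field_simp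
      simp only [hgdef]; linarith
    have hnegtend : Tendsto (fun p : ℝ => -p⁻¹) atTop (nhds 0) := by
      simpa using hinv.neg
    exact tendsto_of_tendsto_of_tendsto_of_le_of_le' hnegtend tendsto_const_nhds hlow hhigh
  -- sqrt(p/m) factor
  have hratio : Tendsto (fun p : ℝ => p / (⌊p⌋₊ : ℝ)) atTop (nhds 1) := by
    have hup : Tendsto (fun p : ℝ => 1 + (p - 1)⁻¹) atTop (nhds 1) := by
      have : Tendsto (fun p : ℝ => (p - 1)⁻¹) atTop (nhds 0) :=
        hinv.comp (tendsto_atTop_add_const_right atTop (-1) tendsto_id)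
      simpa using (tendsto_const_nhds (x := (1:ℝ))).add this
    refine tendsto_of_tendsto_of_tendsto_of_le_of_le' tendsto_const_nhds hup ?_ ?_
    · filter_upwards [eventually_ge_atTop (2:ℝ)] with p hp
      obtain ⟨hm1, hmp, hpm⟩ := hfacts p hp
      have hm0 : (0:ℝ) < (⌊p⌋₊ : ℝ) := by linarith
      rw [le_div_iff₀ hm0]; linarith
    · filter_upwards [eventually_ge_atTop (2:ℝ)] with p hp
      obtain ⟨hm1, hmp, hpm⟩ := hfacts p hp
      have hm0 : (0:ℝ) < (⌊p⌋₊ : ℝ) := by linarith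
      rw [div_le_iff₀ hm0]
      have h1 : (1:ℝ) ≤ (p - 1)⁻¹ * (⌊p⌋₊:ℝ) := by
        rw [inv_mul_eq_div, le_div_iff₀ (by linarith : (0:ℝ) < p - 1)]
        linarith
      nlinarith
  have hsqrt : Tendsto (fun p : ℝ => Real.sqrt (p / (⌊p⌋₊ : ℝ))) atTop (nhds 1) := by
    simpa using hratio.sqrt
  have hexp : Tendsto (fun p : ℝ => Real.exp (g p)) atTop (nhds 1) := by
    simpa [Function.comp_def] using (Real.continuous_exp.tendsto 0).comp hg
  have hall : Tendsto (fun p : ℝ =>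
      Real.exp (g p) * Real.sqrt (p / (⌊p⌋₊ : ℝ)) *
        (Real.sqrt Real.pi / Stirling.stirlingSeq ⌊p⌋₊)) atTop (nhds 1) := by
    simpa using (hexp.mul hsqrt).mul hB
  refine hall.congr' ?_
  filter_upwards [eventually_ge_atTop (2:ℝ)] with p hp
  obtain ⟨hm1, hmp, hpm⟩ := hfacts p hp
  have hm0 : (0:ℝ) < (⌊p⌋₊ : ℝ) := by linarith
  have hp0 : (0:ℝ) < p := by linarith
  have ht : (0:ℝ) < p / (⌊p⌋₊ : ℝ) := by positivity
  set m := ⌊p⌋₊ with hm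
  obtain ⟨k, hk⟩ : ∃ k, m = k + 1 := by
    refine ⟨m - 1, ?_⟩
    have : 1 ≤ m := by exact_mod_cast hm1
    omega
  have hspos : 0 < Stirling.stirlingSeq m := hk ▸ Stirling.stirlingSeq'_pos k
  have hsdef : Stirling.stirlingSeq m =
      (Nat.factorial m : ℝ) / (Real.sqrt (2 * m) * ((m : ℝ) / Real.exp 1) ^ m) := rfl
  have hfac : (0:ℝ) < (Nat.factorial m : ℝ) := by exact_mod_cast Nat.factorial_pos m
  -- rewrite exp (g p)
  have hexpg : Real.exp (g p) = Real.exp ((m:ℝ) - p) * (p / (m:ℝ)) ^ m := by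
    simp only [hgdef]
    rw [Real.exp_add]
    congr 1
    rw [← Real.log_pow, Real.exp_log (pow_pos ht m)]
  -- sqrt identity
  have hs : Real.sqrt (p / (m:ℝ)) * Real.sqrt Real.pi * Real.sqrt (2 * m)
      = Real.sqrt (2 * Real.pi * p) := by
    rw [← Real.sqrt_mul (by positivity), ← Real.sqrt_mul (by positivity)]
    congr 1
    field_simp
  have hexp1 : Real.exp 1 ^ m = Real.exp (m : ℝ) := by
    rw [← Real.exp_nat_mul]; norm_num
  have hepos : (0:ℝ) < Real.exp 1 ^ m := by positivity
  rw [hexpg, hsdef]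
  rw [div_div_eq_mul_div, div_pow, div_pow]
  have hexpm : Real.exp ((m:ℝ) - p) = Real.exp (m:ℝ) / Real.exp p := Real.exp_sub _ _
  rw [hexpm, Real.exp_neg]
  field_simp
  rw [mul_comm (2:ℝ) (m:ℝ)] at hs
  rw [hexp1, show p * 2 * Real.pi = 2 * Real.pi * p by ring, ← hs]
  ring

/-- With `m = ⌊p⌋`, the Poisson probability `h_m(p) = e^{-p} p^m / m!` satisfies
`lim_{p→∞} h_m(p) · √(2πp) = 1`; in particular there exist `C₁ > 0` and `p₀ > 0` such that
`h_{⌊p⌋}(p) ≤ C₁ / √p` for all `p ≥ p₀`. -/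
theorem poisson_at_floor_mean_asymptotics :
    Tendsto (fun p : ℝ =>
        (Real.exp (-p) * p ^ (⌊p⌋₊) / (Nat.factorial ⌊p⌋₊ : ℝ)) * Real.sqrt (2 * Real.pi * p))
      atTop (nhds 1) ∧
    ∃ C₁ > (0 : ℝ), ∃ p₀ > (0 : ℝ), ∀ p : ℝ, p₀ ≤ p →
      Real.exp (-p) * p ^ (⌊p⌋₊) / (Nat.factorial ⌊p⌋₊ : ℝ) ≤ C₁ / Real.sqrt p := by
  refine ⟨poisson_aux_tendsto, 2, two_pos, ?_⟩
  have h2 := poisson_aux_tendsto.eventually_lt_const (by norm_num : (1:ℝ) < 2)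
  rw [eventually_atTop] at h2
  obtain ⟨a, ha⟩ := h2
  refine ⟨max a 1, lt_of_lt_of_le one_pos (le_max_right a 1), fun p hp => ?_⟩
  have hpa : a ≤ p := le_trans (le_max_left a 1) hp
  have hp1 : (1:ℝ) ≤ p := le_trans (le_max_right a 1) hp
  have hp0 : (0:ℝ) < p := by linarith
  have hbig := le_of_lt (ha p hpa)
  set h := Real.exp (-p) * p ^ (⌊p⌋₊) / (Nat.factorial ⌊p⌋₊ : ℝ) with hh
  have hnn : 0 ≤ h := by rw [hh]; positivity
  have hsp : 0 < Real.sqrt p := Real.sqrt_pos.mpr hp0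
  rw [le_div_iff₀ hsp]
  calc h * Real.sqrt p ≤ h * Real.sqrt (2 * Real.pi * p) := by
        apply mul_le_mul_of_nonneg_left _ hnn
        apply Real.sqrt_le_sqrt
        nlinarith [Real.pi_gt_three]
    _ ≤ 2 := hbig
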